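/- Let 0 < h < 1/4, b = argcosh(1/√(4h)), and g(x) = 1/x - (1-x)(1-√(1-4hx))/(2hx^2). Then for every integer r ≥ 0 and x ∈ [0,1), the r-th iterate of g satisfies g^{∘r}(x) = 1 - (1-4h)/(4h·sinh²(argsinh√((1-4h)/(4h(1-x))) + r·b)). -/

import Mathlib

set_option maxHeartbeats 1600000


/-- The offspring generating function `g_λ`, extended continuously at `0` by `g(0) = 1-h`. -/
noncomputable def gGen (h : ℝ) (x : ℝ) : ℝ :=
  if x = 0 then 1 - h
  else 1/x - (1 - x) * (1 - Real.sqrt (1 - 4*h*x)) / (2*h*x^2)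

lemma alg (h u v : ℝ) (hv : 1 < v) (hvu : v ≤ u) (hh : h = v^2/(v^2+1)^2) :
    gGen h (1 - (1 - 4*h)/(4*h) / ((u - u⁻¹)/2)^2) =
      1 - (1 - 4*h)/(4*h) / ((u*v - (u*v)⁻¹)/2)^2 := by
  subst hh
  have hv0 : 0 < v := lt_trans one_pos hv
  have hu1 : 1 < u := lt_of_lt_of_le hv hvu
  have hu0 : 0 < u := lt_trans one_pos hu1
  have hv2 : (1:ℝ) < v^2 := by nlinarith
  have hu2 : (1:ℝ) < u^2 := by nlinarith
  have huv2 : (1:ℝ) < (u*v)^2 := by nlinarith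
  have hvne : v ≠ 0 := ne_of_gt hv0
  have hune : u ≠ 0 := ne_of_gt hu0
  have hv21 : v^2 + 1 ≠ 0 := by positivity
  have hu21 : u^2 - 1 ≠ 0 := by nlinarith
  have hv2m : v^2 - 1 ≠ 0 := by nlinarith
  have hPne : u*v - (u*v)⁻¹ ≠ 0 := by
    have h1 : (u*v)⁻¹ < 1 := by
      rw [inv_lt_one_iff₀]; right; nlinarith
    nlinarith
  have hc : (1 - 4*(v^2/(v^2+1)^2))/(4*(v^2/(v^2+1)^2)) = (v^2-1)^2/(4*v^2) := by
    field_simp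
    ring
  have hS : ((u - u⁻¹)/2)^2 = (u^2-1)^2/(4*u^2) := by
    field_simp
    ring
  have hx : 1 - (v^2-1)^2/(4*v^2) / ((u^2-1)^2/(4*u^2)) =
      ((u^2-1)^2*v^2 - (v^2-1)^2*u^2)/((u^2-1)^2*v^2) := by
    field_simp
  rw [hc, hS, hx]
  rcases eq_or_lt_of_le hvu with heq | hlt
  · subst heq
    have h0 : ((v^2-1)^2*v^2 - (v^2-1)^2*v^2)/((v^2-1)^2*v^2) = 0 := by
      rw [sub_self, zero_div]
    rw [h0]
    unfold gGen
    rw [if_pos rfl]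
    have hP2 : ((v*v - (v*v)⁻¹)/2)^2 = ((v*v)^2-1)^2/(4*(v*v)^2) := by
      field_simp
      ring
    rw [hP2]
    have hv4 : (v*v)^2 - 1 ≠ 0 := by nlinarith
    have hv4' : v^4 - 1 ≠ 0 := by nlinarith
    field_simp
    ring
  · have hN : 0 < (u^2-1)^2*v^2 - (v^2-1)^2*u^2 := by
      have hfac : (u^2-1)^2*v^2 - (v^2-1)^2*u^2
          = ((u-v)*(u*v+1)) * ((u^2-1)*v + (v^2-1)*u) := by ring
      rw [hfac]
      have h1 : 0 < (u-v)*(u*v+1) := mul_pos (by linarith) (by positivity)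
      have h2 : 0 < (u^2-1)*v + (v^2-1)*u := by nlinarith
      exact mul_pos h1 h2
    have hD : 0 < (u^2-1)^2*v^2 := by positivity
    have hxpos : 0 < ((u^2-1)^2*v^2 - (v^2-1)^2*u^2)/((u^2-1)^2*v^2) := div_pos hN hD
    unfold gGen
    rw [if_neg (ne_of_gt hxpos)]
    have hq2 : 1 - 4*(v^2/(v^2+1)^2)*(((u^2-1)^2*v^2 - (v^2-1)^2*u^2)/((u^2-1)^2*v^2))
        = ((v^2-1)*(u^2+1)/((v^2+1)*(u^2-1)))^2 := by
      field_simp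
      ring
    have hq0 : 0 ≤ (v^2-1)*(u^2+1)/((v^2+1)*(u^2-1)) := by
      apply div_nonneg <;> nlinarith
    rw [hq2, Real.sqrt_sq hq0]
    have hNne : (u^2-1)^2*v^2 - (v^2-1)^2*u^2 ≠ 0 := ne_of_gt hN
    have hP2 : ((u*v - (u*v)⁻¹)/2)^2 = ((u*v)^2-1)^2/(4*(u*v)^2) := by
      field_simp
      ring
    have hB : 1 - (v^2-1)^2/(4*v^2) / (((u*v)^2-1)^2/(4*(u*v)^2)) =
        1 - (v^2-1)^2*u^2/((u^2*v^2-1)^2) := by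
      have huv1 : (u*v)^2 - 1 ≠ 0 := by nlinarith
      have huv1' : u^2*v^2 - 1 ≠ 0 := by nlinarith
      field_simp
    rw [hP2, hB]
    have h1x : 1/(((u^2-1)^2*v^2 - (v^2-1)^2*u^2)/((u^2-1)^2*v^2))
        = ((u^2-1)^2*v^2)/((u^2-1)^2*v^2 - (v^2-1)^2*u^2) := one_div_div _ _
    have h2 : 1 - ((u^2-1)^2*v^2 - (v^2-1)^2*u^2)/((u^2-1)^2*v^2)
        = (v^2-1)^2*u^2/((u^2-1)^2*v^2) := by
      field_simp
      ring
    have h3 : 1 - (v^2-1)*(u^2+1)/((v^2+1)*(u^2-1))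
        = 2*(u^2-v^2)/((v^2+1)*(u^2-1)) := by
      field_simp
      ring
    rw [h1x, h2, h3]
    have huv1' : u^2*v^2 - 1 ≠ 0 := by nlinarith
    obtain ⟨w, hw⟩ : ∃ w, w = (u^2-1)^2*v^2 - (v^2-1)^2*u^2 := ⟨_, rfl⟩
    rw [← hw] at hNne ⊢
    field_simp
    rw [hw]
    ring

/-- closed form for the iterates of `g` in the subcritical case `0 < h < 1/4`:
`g^{∘r}(x) = 1 - (1-4h)/(4h sinh²(arsinh √((1-4h)/(4h(1-x))) + r b))`, `b = arcosh(1/√(4h))`. -/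
theorem stmt_7 (h : ℝ) (hh : 0 < h) (hh4 : h < 1/4)
    (b : ℝ) (hb : 0 ≤ b) (hcb : Real.cosh b = 1 / Real.sqrt (4*h)) :
    ∀ (r : ℕ) (x : ℝ), x ∈ Set.Ico (0 : ℝ) 1 →
      (gGen h)^[r] x =
        1 - (1 - 4*h) /
          (4*h * (Real.sinh (Real.arsinh (Real.sqrt ((1 - 4*h) / (4*h*(1 - x)))) + r * b))^2) := by
  intro r x hx
  obtain ⟨hx0, hx1⟩ := hx
  have h4 : (0:ℝ) < 4*h := by linarith
  have hs4pos : 0 < Real.sqrt (4*h) := Real.sqrt_pos.mpr h4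
  have hs4 : Real.sqrt (4*h) < 1 := by
    rw [show (1:ℝ) = Real.sqrt 1 from (Real.sqrt_one).symm]
    exact Real.sqrt_lt_sqrt (by linarith) (by linarith)
  have hcosh1 : 1 < Real.cosh b := by
    rw [hcb, lt_div_iff₀ hs4pos]; linarith
  have hbpos : 0 < b := by
    rcases lt_or_eq_of_le hb with h' | h'
    · exact h'
    · exfalso; rw [← h', Real.cosh_zero] at hcosh1; linarith
  have hv1 : (1:ℝ) < Real.exp b := by
    calc (1:ℝ) = Real.exp 0 := Real.exp_zero.symm
    _ < Real.exp b := Real.exp_lt_exp.mpr hbpos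
  set v := Real.exp b with hvdef
  have hv0 : 0 < v := lt_trans one_pos hv1
  have hvne : v ≠ 0 := ne_of_gt hv0
  have hcoshb : Real.cosh b = (v^2+1)/(2*v) := by
    rw [Real.cosh_eq, Real.exp_neg, ← hvdef]
    field_simp
  have hsq : Real.sqrt (4*h) = 2*v/(v^2+1) := by
    have h1 : (v^2+1)/(2*v) = 1/Real.sqrt (4*h) := by rw [← hcoshb, hcb]
    have h2 : Real.sqrt (4*h) * ((v^2+1)/(2*v)) = 1 := by
      rw [h1]
      field_simp
    have hv21 : (0:ℝ) < v^2+1 := by positivity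
    rw [eq_div_iff (by positivity : (v^2+1) ≠ 0)]
    have e : Real.sqrt (4*h) * ((v^2+1)/(2*v)) * (2*v) = 1 * (2*v) := by rw [h2]
    rw [mul_assoc, div_mul_cancel₀ _ (by positivity : (2*v) ≠ 0), one_mul] at e
    linarith
  have hhv : h = v^2/(v^2+1)^2 := by
    have h3 : 4*h = (2*v/(v^2+1))^2 := by
      rw [← hsq, Real.sq_sqrt (le_of_lt h4)]
    have hv21 : (v^2+1) ≠ 0 := by positivity
    field_simp at h3 ⊢
    linarith
  have h14 : (0:ℝ) < 1 - 4*h := by linarith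
  have hc : 0 < (1-4*h)/(4*h) := div_pos h14 h4
  have h1x : 0 < 1 - x := by linarith
  have hform : (1 - 4*h)/(4*h*(1-x)) = ((1-4*h)/(4*h))/(1-x) := by rw [div_div]
  set s := Real.arsinh (Real.sqrt ((1-4*h)/(4*h*(1-x)))) with hsdef
  have hsinh_s : Real.sinh s = Real.sqrt ((1-4*h)/(4*h*(1-x))) := Real.sinh_arsinh _
  have hsinh_b2 : (Real.sinh b)^2 = (1-4*h)/(4*h) := by
    have hcs := Real.cosh_sq b
    rw [hcb] at hcs
    have h6 : (1/Real.sqrt (4*h))^2 = 1/(4*h) := by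
      rw [div_pow, one_pow, Real.sq_sqrt (le_of_lt h4)]
    rw [h6] at hcs
    field_simp at hcs ⊢
    linarith
  have hsinh_b : Real.sinh b = Real.sqrt ((1-4*h)/(4*h)) := by
    have h7 : 0 ≤ Real.sinh b := by
      rw [← Real.sinh_zero]
      exact Real.sinh_le_sinh.mpr hb
    rw [← Real.sqrt_sq h7, hsinh_b2]
  have hbs : b ≤ s := by
    rw [hsdef, ← Real.arsinh_sinh b, hsinh_b]
    apply Real.arsinh_le_arsinh.mpr
    apply Real.sqrt_le_sqrt
    rw [div_le_div_iff₀ h4 (by positivity)]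
    nlinarith [mul_nonneg (mul_nonneg (le_of_lt h14) (le_of_lt h4)) hx0]
  have key : ∀ m : ℕ, (gGen h)^[m] x
      = 1 - (1-4*h)/(4*h) / (Real.sinh (s + m*b))^2 := by
    intro m
    induction m with
    | zero =>
      simp only [Function.iterate_zero, id_eq, Nat.cast_zero, zero_mul, add_zero]
      rw [hsinh_s, Real.sq_sqrt (by positivity : (0:ℝ) ≤ (1-4*h)/(4*h*(1-x))), hform]
      have hd : (1-4*h)/(4*h) / ((1-4*h)/(4*h)/(1-x)) = 1-x := by
        rw [div_div_eq_mul_div, mul_comm, mul_div_assoc,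
          div_self (ne_of_gt hc), mul_one]
      rw [hd]
      ring
    | succ n ih =>
      rw [Function.iterate_succ_apply', ih]
      have hnb : (0:ℝ) ≤ (n:ℝ)*b := mul_nonneg (Nat.cast_nonneg n) hb
      have ht : b ≤ s + (n:ℝ)*b := by linarith
      have hsinht : Real.sinh (s + (n:ℝ)*b)
          = (Real.exp (s + (n:ℝ)*b) - (Real.exp (s + (n:ℝ)*b))⁻¹)/2 := by
        rw [Real.sinh_eq, Real.exp_neg]
      have hsinhtb : Real.sinh ((s + (n:ℝ)*b) + b)
          = (Real.exp (s + (n:ℝ)*b) * v - (Real.exp (s + (n:ℝ)*b) * v)⁻¹)/2 := by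
        rw [Real.sinh_eq, Real.exp_neg, Real.exp_add, ← hvdef]
      have hvu : v ≤ Real.exp (s + (n:ℝ)*b) := Real.exp_le_exp.mpr ht
      have halg := alg h (Real.exp (s + (n:ℝ)*b)) v hv1 hvu hhv
      have hcast : s + (↑(n+1):ℝ)*b = (s + (n:ℝ)*b) + b := by push_cast; ring
      rw [hcast, hsinhtb, hsinht]
      exact halg
  rw [key r, div_div]
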